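/- Suppose λ* : ℝⁿ → ℝᵐ is differentiable at x with V(x) = −½ λ*(x)ᵀ G H⁻¹ Gᵀ λ*(x) − λ*(x)ᵀ(W + S x) near x, and for each i either Gᵢ z*(x') − Wᵢ − Sᵢ x' = 0 for all x' near x, or λᵢ*(x') = 0 for all x' near x, where z*(x) = −H⁻¹ Gᵀ λ*(x). Then ∇ₓV(x) = −Sᵀ λ*(x). -/

import Mathlib

open Matrix


lemma hasFDerivAt_dotProduct' {n m : ℕ} {f g : (Fin n → ℝ) → (Fin m → ℝ)}
    {f' g' : (Fin n → ℝ) →L[ℝ] (Fin m → ℝ)} {x : Fin n → ℝ}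
    (hf : HasFDerivAt f f' x) (hg : HasFDerivAt g g' x) :
    HasFDerivAt (fun x' => f x' ⬝ᵥ g x')
      (∑ i, (f x i • ((ContinuousLinearMap.proj i).comp g')
           + g x i • ((ContinuousLinearMap.proj i).comp f'))) x := by
  have h : ∀ i : Fin m, HasFDerivAt (fun x' => f x' i * g x' i)
      (f x i • ((ContinuousLinearMap.proj i).comp g')
        + g x i • ((ContinuousLinearMap.proj i).comp f')) x := by
    intro i
    have hfi : HasFDerivAt (fun x' => f x' i)
        ((ContinuousLinearMap.proj i (R := ℝ) (φ := fun _ : Fin m => ℝ)).comp f') x :=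
      by simpa [Function.comp_def] using
        (ContinuousLinearMap.proj i (R := ℝ) (φ := fun _ : Fin m => ℝ)).hasFDerivAt.comp x hf
    have hgi : HasFDerivAt (fun x' => g x' i)
        ((ContinuousLinearMap.proj i (R := ℝ) (φ := fun _ : Fin m => ℝ)).comp g') x :=
      by simpa [Function.comp_def] using
        (ContinuousLinearMap.proj i (R := ℝ) (φ := fun _ : Fin m => ℝ)).hasFDerivAt.comp x hg
    exact hfi.mul hgi
  simpa [dotProduct] using HasFDerivAt.fun_sum (fun i (_ : i ∈ Finset.univ) => h i)


/-- Differentiating the dual expression of the mpQP value function: if `λ*` is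
differentiable at `x`, `V` agrees near `x` with the dual objective evaluated at
`λ*`, and for each constraint `i` either the constraint is active
(`Gᵢ z*(x') = Wᵢ + Sᵢ x'`) near `x` or `λᵢ*` vanishes near `x` (where
`z*(x') = -H⁻¹ Gᵀ λ*(x')`), then `∇ₓV(x) = -Sᵀ λ*(x)`. -/
theorem qp_value_gradient (s n m : ℕ)
    (H : Matrix (Fin s) (Fin s) ℝ) (G : Matrix (Fin m) (Fin s) ℝ)
    (W : Fin m → ℝ) (S : Matrix (Fin m) (Fin n) ℝ)
    (hH : H.PosDef) (hHsymm : H.IsSymm)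
    (lam : (Fin n → ℝ) → (Fin m → ℝ)) (x : Fin n → ℝ)
    (Dl : (Fin n → ℝ) →L[ℝ] (Fin m → ℝ))
    (hl : HasFDerivAt lam Dl x)
    (zstar : (Fin n → ℝ) → (Fin s → ℝ))
    (hzstar : zstar = fun x' => -(H⁻¹.mulVec (Gᵀ.mulVec (lam x'))))
    (V : (Fin n → ℝ) → ℝ)
    (hV : ∀ᶠ x' in nhds x,
      V x' = -(1/2) * (lam x' ⬝ᵥ (G * H⁻¹ * Gᵀ).mulVec (lam x'))
               - lam x' ⬝ᵥ (W + S.mulVec x'))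
    (hcomp : ∀ i : Fin m,
      (∀ᶠ x' in nhds x, G.mulVec (zstar x') i - W i - S.mulVec x' i = 0) ∨
      (∀ᶠ x' in nhds x, lam x' i = 0)) :
    ∃ L : (Fin n → ℝ) →L[ℝ] ℝ, HasFDerivAt V L x ∧
      ∀ w : Fin n → ℝ, L w = -(Sᵀ.mulVec (lam x)) ⬝ᵥ w := by
  classical
  set M : Matrix (Fin m) (Fin m) ℝ := G * H⁻¹ * Gᵀ with hMdef
  have hMsymm : Mᵀ = M := by
    have hHinv : (H⁻¹)ᵀ = H⁻¹ := by
      rw [Matrix.transpose_nonsing_inv, hHsymm]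
    rw [hMdef]
    rw [Matrix.transpose_mul, Matrix.transpose_mul, Matrix.transpose_transpose, hHinv,
      Matrix.mul_assoc]
  -- derivative of x' ↦ M.mulVec (lam x')
  have hMlam : HasFDerivAt (fun x' => M.mulVec (lam x'))
      (((Matrix.mulVecLin M).toContinuousLinearMap).comp Dl) x := by
    simpa [Function.comp] using
      ((Matrix.mulVecLin M).toContinuousLinearMap.hasFDerivAt).comp x hl
  -- derivative of x' ↦ W + S.mulVec x'
  have hWS : HasFDerivAt (fun x' => W + S.mulVec x')
      ((Matrix.mulVecLin S).toContinuousLinearMap) x := by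
    have h1 : HasFDerivAt (fun x' : Fin n → ℝ => S.mulVec x')
        ((Matrix.mulVecLin S).toContinuousLinearMap) x := by
      simpa using (Matrix.mulVecLin S).toContinuousLinearMap.hasFDerivAt
    simpa using h1.const_add W
  have hA := hasFDerivAt_dotProduct' hl hMlam
  have hB := hasFDerivAt_dotProduct' hl hWS
  have hF := (hA.const_mul (-(1/2) : ℝ)).sub hB
  have hVF := hF.congr_of_eventuallyEq hV
  refine ⟨_, hVF, ?_⟩
  intro w
  have happ : ∀ (f' : (Fin n → ℝ) →L[ℝ] (Fin m → ℝ)) (a b : Fin m → ℝ),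
      (∑ i, (a i • ((ContinuousLinearMap.proj i).comp f')
           + b i • ((ContinuousLinearMap.proj i).comp Dl))) w
        = a ⬝ᵥ f' w + b ⬝ᵥ Dl w := by
    intro f' a b
    simp [dotProduct, Finset.sum_add_distrib]
  have hAw : (∑ i, (lam x i • ((ContinuousLinearMap.proj i).comp
          (((Matrix.mulVecLin M).toContinuousLinearMap).comp Dl))
        + M.mulVec (lam x) i • ((ContinuousLinearMap.proj i).comp Dl))) w
      = lam x ⬝ᵥ M.mulVec (Dl w) + M.mulVec (lam x) ⬝ᵥ Dl w := by
    simpa using happ (((Matrix.mulVecLin M).toContinuousLinearMap).comp Dl) (lam x)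
      (M.mulVec (lam x))
  have hBw : (∑ i, (lam x i • ((ContinuousLinearMap.proj i).comp
          ((Matrix.mulVecLin S).toContinuousLinearMap))
        + (W + S.mulVec x) i • ((ContinuousLinearMap.proj i).comp Dl))) w
      = lam x ⬝ᵥ S.mulVec w + (W + S.mulVec x) ⬝ᵥ Dl w := by
    simpa using happ ((Matrix.mulVecLin S).toContinuousLinearMap) (lam x) (W + S.mulVec x)
  have hsym : lam x ⬝ᵥ M.mulVec (Dl w) = M.mulVec (lam x) ⬝ᵥ Dl w := by
    rw [Matrix.dotProduct_mulVec, ← Matrix.mulVec_transpose, hMsymm]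
  -- key vanishing
  have hkey : ∀ i : Fin m,
      M.mulVec (lam x) i + (W i + S.mulVec x i) = 0 ∨ Dl w i = 0 := by
    intro i
    rcases hcomp i with h | h
    · left
      have hx := h.self_of_nhds
      have hz : G.mulVec (zstar x) i = -(M.mulVec (lam x) i) := by
        rw [hzstar]
        simp [Matrix.mulVec_neg, Matrix.mulVec_mulVec, Matrix.mul_assoc, hMdef]
      rw [hz] at hx
      linarith
    · right
      have h0 : HasFDerivAt (fun x' => lam x' i) (0 : (Fin n → ℝ) →L[ℝ] ℝ) x :=
        (hasFDerivAt_const (0 : ℝ) x).congr_of_eventuallyEq h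
      have hli : HasFDerivAt (fun x' => lam x' i)
          ((ContinuousLinearMap.proj i (R := ℝ) (φ := fun _ : Fin m => ℝ)).comp Dl) x := by
        simpa [Function.comp_def] using
          (ContinuousLinearMap.proj i (R := ℝ) (φ := fun _ : Fin m => ℝ)).hasFDerivAt.comp x hl
      have := hli.unique h0
      have := congrArg (fun (T : (Fin n → ℝ) →L[ℝ] ℝ) => T w) this
      simpa using this
  have hsum : M.mulVec (lam x) ⬝ᵥ Dl w + (W + S.mulVec x) ⬝ᵥ Dl w = 0 := by
    simp only [dotProduct, Pi.add_apply, ← Finset.sum_add_distrib]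
    apply Finset.sum_eq_zero
    intro i _
    rcases hkey i with h | h
    · have h2 : (M *ᵥ lam x) i = -(W i + (S *ᵥ x) i) := by linarith
      rw [h2]; ring
    · rw [h]; ring
  have hSw : lam x ⬝ᵥ S.mulVec w = Sᵀ.mulVec (lam x) ⬝ᵥ w := by
    rw [Matrix.dotProduct_mulVec, ← Matrix.mulVec_transpose]
  simp only [ContinuousLinearMap.sub_apply, ContinuousLinearMap.smul_apply, smul_eq_mul]
  rw [hAw, hBw, hsym, hSw, neg_dotProduct]
  linarith
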